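/- Assume (A1) and (A2), and suppose a ∈ (-∞, 0) is finite. Let η ∈ L⁰(P) with η ≥ 0, E[Φ(η)] < ∞ and 0 < E[η] ≤ 1. If c ≤ a·E[η], then the infimum inf_{λ>0} { λc + E[Φ(λη)] } is not attained at any λ > 0; moreover if c < a·E[η], then this infimum equals -∞. -/

import Mathlib

open MeasureTheory Filter Set Topology
open scoped ENNReal

noncomputable section

/-- The positive part of an extended real number, as an element of `ℝ≥0∞`. -/
def EReal.toENN (x : EReal) : ℝ≥0∞ := if x = ⊤ then ⊤ else ENNReal.ofReal x.toReal

/-- Extended-real-valued expectation: the lower integral of the positive part minus the lower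
integral of the negative part. -/
def ewp {Ω : Type*} [MeasurableSpace Ω] (P : Measure Ω) (H : Ω → EReal) : EReal :=
  ((∫⁻ ω, (H ω).toENN ∂P : ℝ≥0∞) : EReal) - ((∫⁻ ω, (-(H ω)).toENN ∂P : ℝ≥0∞) : EReal)

lemma toENN_mono {x y : EReal} (h : x ≤ y) : x.toENN ≤ y.toENN := by
  unfold EReal.toENN
  rcases eq_or_ne y ⊤ with hy | hy
  · simp [hy]
  · have hx : x ≠ ⊤ := fun hx => hy (top_le_iff.mp (hx ▸ h))
    rw [if_neg hx, if_neg hy]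
    rcases eq_or_ne x ⊥ with hb | hb
    · simp [hb]
    · exact ENNReal.ofReal_le_ofReal (EReal.toReal_le_toReal h hb hy)

lemma toENN_coe (r : ℝ) : ((r : EReal)).toENN = ENNReal.ofReal r := by
  simp [EReal.toENN]

lemma tangent_line {a : ℝ} {U du : ℝ → ℝ}
    (hdu : ∀ x : ℝ, a < x → HasDerivAt U (du x) x)
    (hdu_anti : StrictAntiOn du (Ioi a)) :
    ∀ x ∈ Ioi a, ∀ z ∈ Ioi a, U z ≤ U x + du x * (z - x) := by
  intro x hx z hz
  have hcont : ∀ s : Set ℝ, s ⊆ Ioi a → ContinuousOn U s := fun s hs y hy =>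
    ((hdu y (hs hy)).continuousAt).continuousWithinAt
  rcases lt_trichotomy z x with h | h | h
  · have hsub : Icc z x ⊆ Ioi a := fun w hw => lt_of_lt_of_le hz hw.1
    obtain ⟨ξ, hξ, hslope⟩ := exists_hasDerivAt_eq_slope U du h (hcont _ hsub)
      (fun w hw => hdu w (hsub (Ioo_subset_Icc_self hw)))
    have hξa : ξ ∈ Ioi a := hsub (Ioo_subset_Icc_self hξ)
    have hlt : du x < du ξ := hdu_anti hξa hx hξ.2
    have h1 : U x - U z = du ξ * (x - z) := by
      rw [hslope, div_mul_cancel₀]; · exact (sub_ne_zero.mpr (ne_of_gt h))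
    nlinarith [sub_pos.mpr h, sub_pos.mpr hlt]
  · simp [h]
  · have hsub : Icc x z ⊆ Ioi a := fun w hw => lt_of_lt_of_le hx hw.1
    obtain ⟨ξ, hξ, hslope⟩ := exists_hasDerivAt_eq_slope U du h (hcont _ hsub)
      (fun w hw => hdu w (hsub (Ioo_subset_Icc_self hw)))
    have hξa : ξ ∈ Ioi a := hsub (Ioo_subset_Icc_self hξ)
    have hlt : du ξ < du x := hdu_anti hx hξa hξ.1
    have h1 : U z - U x = du ξ * (z - x) := by
      rw [hslope, div_mul_cancel₀]; · exact (sub_ne_zero.mpr (ne_of_gt h))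
    nlinarith [sub_pos.mpr h, sub_pos.mpr hlt]

lemma du_surj {a : ℝ} {du : ℝ → ℝ}
    (hdu_cont : ContinuousOn du (Ioi a))
    (hdu_inada_top : Tendsto du (𝓝[>] a) atTop)
    (hdu_inada_zero : Tendsto du atTop (𝓝 0)) :
    ∀ y : ℝ, 0 < y → ∃ x, a < x ∧ du x = y := by
  intro y hy
  have h1 : ∀ᶠ x in 𝓝[>] a, y ≤ du x := hdu_inada_top.eventually_ge_atTop y
  obtain ⟨x1, hx1y, hx1a⟩ := (h1.and self_mem_nhdsWithin).exists
  have h2 : ∀ᶠ x in atTop, du x < y := hdu_inada_zero.eventually_lt_const hy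
  obtain ⟨N, hN⟩ := h2.exists_forall_of_atTop
  set x2 := max N (x1 + 1) with hx2
  have hx12 : x1 ≤ x2 := le_trans (by linarith) (le_max_right _ _)
  have hx2a : a < x2 := lt_of_lt_of_le hx1a hx12
  have hx2y : du x2 < y := hN _ (le_max_left _ _)
  have hsub : Icc x1 x2 ⊆ Ioi a := fun w hw => lt_of_lt_of_le hx1a hw.1
  have := intermediate_value_Icc' hx12 (hdu_cont.mono hsub)
  obtain ⟨x, hx, hxy⟩ := this ⟨hx2y.le, hx1y⟩
  exact ⟨x, hsub hx, hxy⟩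

lemma sup_attained {a : ℝ} {u Phi : ℝ → EReal} {du : ℝ → ℝ}
    (hu_ne_top : ∀ x : ℝ, u x ≠ ⊤) (hu_bot : ∀ x : ℝ, x < a → u x = ⊥)
    (hu_fin : ∀ x : ℝ, a < x → u x ≠ ⊥) (hu_mono : Monotone u)
    (hdu : ∀ x : ℝ, a < x → HasDerivAt (fun t : ℝ => (u t).toReal) (du x) x)
    (hdu_anti : StrictAntiOn du (Ioi a))
    (hPhi : ∀ y : ℝ, Phi y = ⨆ x : ℝ, (u x - ((x * y : ℝ) : EReal)))
    {y x : ℝ} (hy : 0 < y) (hx : a < x) (hxy : du x = y) :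
    Phi y = (((u x).toReal - x * y : ℝ) : EReal) := by
  set U : ℝ → ℝ := fun z => (u z).toReal with hU
  have hucoe : ∀ z, a < z → u z = ((U z : ℝ) : EReal) := fun z hz =>
    (EReal.coe_toReal (hu_ne_top z) (hu_fin z hz)).symm
  have main : ∀ z, a < z → U z - z * y ≤ U x - x * y := by
    intro z hz
    have := tangent_line hdu hdu_anti x hx z hz
    have hxy' : du x = y := hxy
    nlinarith [this]
  apply le_antisymm
  · rw [hPhi]
    apply iSup_le
    intro z
    rcases lt_trichotomy z a with h | h | h
    · rw [hu_bot z h, EReal.bot_sub]; exact bot_le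
    · subst h
      rcases eq_or_ne (u z) ⊥ with hb | hb
      · rw [hb, EReal.bot_sub]; exact bot_le
      · rw [← EReal.coe_toReal (hu_ne_top z) hb, ← EReal.coe_sub, EReal.coe_le_coe_iff]
        apply le_of_forall_pos_le_add
        intro ε hε
        set z' := z + ε / y with hz'
        have hzz' : z < z' := lt_add_of_pos_right _ (div_pos hε hy)
        have h1 : (u z).toReal ≤ U z' :=
          EReal.toReal_le_toReal (hu_mono hzz'.le) hb (hu_ne_top z')
        have h2 : U z' - z' * y ≤ U x - x * y := main z' hzz'
        have h3 : (z' - z) * y = ε := by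
          rw [hz']; field_simp; ring
        nlinarith
    · rw [hucoe z h, ← EReal.coe_sub]
      exact_mod_cast main z h
  · rw [hPhi]
    refine le_trans (le_of_eq ?_) (le_iSup (fun z => u z - ((z * y : ℝ) : EReal)) x)
    rw [EReal.coe_sub, EReal.coe_toReal (hu_ne_top x) (hu_fin x hx)]

/-- Proposition 26, last part.  Assume (A1), (A2) and that `a ∈ (-∞, 0)`
is finite.  Let `η ≥ 0` with `E[Φ(η)] < ∞` and `0 < E[η] ≤ 1`.  If `c ≤ a·E[η]`, then the
infimum `inf_{λ>0} {λc + E[Φ(λη)]}` is not attained at any `λ > 0`; moreover if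
`c < a·E[η]`, the infimum equals `-∞`. -/
theorem statement11
    {Ω : Type*} [MeasurableSpace Ω] (P : Measure Ω) [IsProbabilityMeasure P]
    (a : ℝ) (ha : a < 0)
    (u : ℝ → EReal)
    (hu_ne_top : ∀ x : ℝ, u x ≠ ⊤)
    (hu_bot : ∀ x : ℝ, x < a → u x = ⊥)
    (hu_fin : ∀ x : ℝ, a < x → u x ≠ ⊥)
    (hu_mono : Monotone u)
    (du : ℝ → ℝ)
    (hdu : ∀ x : ℝ, a < x → HasDerivAt (fun t : ℝ => (u t).toReal) (du x) x)
    (hdu_cont : ContinuousOn du (Ioi a))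
    (hdu_pos : ∀ x : ℝ, a < x → 0 < du x)
    (hdu_anti : StrictAntiOn du (Ioi a))
    (hdu_inada_top : Tendsto du (𝓝[>] a) atTop)
    (hdu_inada_zero : Tendsto du atTop (𝓝 0))
    (Phi : ℝ → EReal)
    (hPhi : ∀ y : ℝ, Phi y = ⨆ x : ℝ, (u x - ((x * y : ℝ) : EReal)))
    (hA2 : ∀ g : Ω → ℝ, Measurable g → (∀ ω, 0 ≤ g ω) →
      ∫⁻ ω, (Phi (g ω)).toENN ∂P < ⊤ →
      ∀ l : ℝ, 0 < l → ∫⁻ ω, (Phi (l * g ω)).toENN ∂P < ⊤)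
    -- `η ∈ L_Φ` with `0 < E[η] ≤ 1`
    (eta : Ω → ℝ) (heta_meas : Measurable eta) (heta_nonneg : ∀ ω, 0 ≤ eta ω)
    (hetaPhi : ∫⁻ ω, (Phi (eta ω)).toENN ∂P < ⊤)
    (hmean_pos : 0 < ∫⁻ ω, ENNReal.ofReal (eta ω) ∂P)
    (hmean_le : ∫⁻ ω, ENNReal.ofReal (eta ω) ∂P ≤ 1)
    (c : ℝ) :
    -- if `c ≤ a·E[η]` the infimum is not attained at any `λ > 0` …
    (c ≤ a * (∫⁻ ω, ENNReal.ofReal (eta ω) ∂P).toReal →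
      ∀ t : ℝ, 0 < t → ∃ s : ℝ, 0 < s ∧
        ((s * c : ℝ) : EReal) + ewp P (fun ω => Phi (s * eta ω)) <
          ((t * c : ℝ) : EReal) + ewp P (fun ω => Phi (t * eta ω))) ∧
    -- … and if `c < a·E[η]` the infimum equals `-∞`
    (c < a * (∫⁻ ω, ENNReal.ofReal (eta ω) ∂P).toReal →
      ∀ M : ℝ, ∃ t : ℝ, 0 < t ∧
        ((t * c : ℝ) : EReal) + ewp P (fun ω => Phi (t * eta ω)) < (M : EReal)) := by
  classical
  have hm'top : (∫⁻ ω, ENNReal.ofReal (eta ω) ∂P) ≠ ⊤ :=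
    (lt_of_le_of_lt hmean_le ENNReal.one_lt_top).ne
  set m : ℝ := (∫⁻ ω, ENNReal.ofReal (eta ω) ∂P).toReal with hmdef
  have hm_pos : 0 < m := ENNReal.toReal_pos hmean_pos.ne' hm'top
  have surj : ∀ y : ℝ, 0 < y → ∃ x, a < x ∧ du x = y :=
    du_surj hdu_cont hdu_inada_top hdu_inada_zero
  have supAtt : ∀ y x : ℝ, 0 < y → a < x → du x = y →
      Phi y = (((u x).toReal - x * y : ℝ) : EReal) :=
    fun y x hy hx hxy => sup_attained hu_ne_top hu_bot hu_fin hu_mono hdu hdu_anti hPhi hy hx hxy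
  have phicoe : ∀ y : ℝ, 0 < y → Phi y = (((Phi y).toReal : ℝ) : EReal) := by
    intro y hy
    obtain ⟨x, hx, hxy⟩ := surj y hy
    rw [supAtt y x hy hx hxy, EReal.toReal_coe]
  have philb : ∀ x : ℝ, a < x → ∀ y : ℝ, (((u x).toReal - x * y : ℝ) : EReal) ≤ Phi y := by
    intro x hx y
    rw [hPhi]
    refine le_trans (le_of_eq ?_) (le_iSup (fun z => u z - ((z * y : ℝ) : EReal)) x)
    rw [EReal.coe_sub, EReal.coe_toReal (hu_ne_top x) (hu_fin x hx)]
  have phi_ne_bot : ∀ y : ℝ, Phi y ≠ ⊥ := by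
    intro y hbot
    have h := philb (a + 1) (by linarith) y
    rw [hbot, le_bot_iff] at h
    exact EReal.coe_ne_bot _ h
  have keyineq : ∀ y1 y2 x : ℝ, 0 < y1 → y1 < y2 → a < x → du x = y2 →
      (Phi y2).toReal ≤ (Phi y1).toReal - x * (y2 - y1) := by
    intro y1 y2 x h1 h12 hx hxy
    have k1 : (Phi y2).toReal = (u x).toReal - x * y2 := by
      rw [supAtt y2 x (h1.trans h12) hx hxy, EReal.toReal_coe]
    have k2 : (u x).toReal - x * y1 ≤ (Phi y1).toReal := by
      have hle := philb x hx y1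
      rw [phicoe y1 h1] at hle
      exact EReal.coe_le_coe_iff.mp hle
    linarith
  -- measurability via an antitone auxiliary function
  have hχanti : Antitone (fun y : ℝ =>
      if 0 < y then (((Phi y).toReal + a * y : ℝ) : EReal) else (⊤ : EReal)) := by
    intro y1 y2 h12
    by_cases h1 : 0 < y1
    · have h2 : 0 < y2 := lt_of_lt_of_le h1 h12
      simp only [if_pos h1, if_pos h2, EReal.coe_le_coe_iff]
      rcases eq_or_lt_of_le h12 with rfl | hlt
      · exact le_refl _
      · obtain ⟨x, hx, hxy⟩ := surj y2 h2
        have hk := keyineq y1 y2 x h1 hlt hx hxy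
        nlinarith [mul_le_mul_of_nonneg_right (le_of_lt hx) (sub_nonneg.mpr hlt.le)]
    · simp only [if_neg h1]; exact le_top
  have hχmeas : Measurable (fun y : ℝ =>
      if 0 < y then (((Phi y).toReal + a * y : ℝ) : EReal) else (⊤ : EReal)) :=
    hχanti.measurable
  have hGmeas : ∀ l : ℝ, 0 < l → Measurable (fun ω => (Phi (l * eta ω)).toReal) := by
    intro l hl
    have heq : (fun ω => (Phi (l * eta ω)).toReal)
        = fun ω => if 0 < eta ω then
            ((fun y : ℝ => if 0 < y then (((Phi y).toReal + a * y : ℝ) : EReal) else (⊤ : EReal))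
              (l * eta ω)).toReal - a * (l * eta ω)
          else (Phi 0).toReal := by
      funext ω
      by_cases h : 0 < eta ω
      · rw [if_pos h]
        have hly : 0 < l * eta ω := mul_pos hl h
        simp only [if_pos hly, EReal.toReal_coe]
        ring
      · rw [if_neg h]
        have h0 : eta ω = 0 := le_antisymm (not_lt.mp h) (heta_nonneg ω)
        rw [h0, mul_zero]
    rw [heq]
    refine Measurable.ite (measurableSet_lt measurable_const heta_meas) ?_ measurable_const
    exact (hχmeas.comp (heta_meas.const_mul l)).ereal_toReal.sub
      ((heta_meas.const_mul l).const_mul a)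
  have hae_ne_top : ∀ l : ℝ, 0 < l → ∀ᵐ ω ∂P, Phi (l * eta ω) ≠ ⊤ := by
    intro l hl
    by_cases hP0 : Phi 0 = ⊤
    · have hSm : MeasurableSet {ω | eta ω = 0} := heta_meas (measurableSet_singleton 0)
      have hnull : P {ω | eta ω = 0} = 0 := by
        by_contra hpos
        have h1 : ∫⁻ ω in {ω | eta ω = 0}, (Phi (eta ω)).toENN ∂P = ⊤ := by
          have heqc : ∫⁻ ω in {ω | eta ω = 0}, (Phi (eta ω)).toENN ∂P
              = ∫⁻ _ω in {ω | eta ω = 0}, (⊤ : ℝ≥0∞) ∂P :=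
            setLIntegral_congr_fun hSm
              (fun ω (hω : eta ω = 0) => by
                show (Phi (eta ω)).toENN = ⊤; rw [hω, hP0]; simp [EReal.toENN])
          rw [heqc, setLIntegral_const, ENNReal.top_mul hpos]
        have h2 := setLIntegral_le_lintegral {ω | eta ω = 0} (fun ω => (Phi (eta ω)).toENN) (μ := P)
        rw [h1, top_le_iff] at h2
        exact hetaPhi.ne h2
      have hae : ∀ᵐ ω ∂P, eta ω ≠ 0 := by
        rw [ae_iff]
        simpa using hnull
      filter_upwards [hae] with ω hω
      have hpos : 0 < eta ω := lt_of_le_of_ne (heta_nonneg ω) (Ne.symm hω)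
      rw [phicoe _ (mul_pos hl hpos)]
      exact EReal.coe_ne_top _
    · refine ae_of_all _ (fun ω => ?_)
      rcases (heta_nonneg ω).lt_or_eq with h | h
      · rw [phicoe _ (mul_pos hl h)]; exact EReal.coe_ne_top _
      · rw [← h, mul_zero]; exact hP0
  have hpos_fin : ∀ l : ℝ, 0 < l → ∫⁻ ω, (Phi (l * eta ω)).toENN ∂P < ⊤ :=
    fun l hl => hA2 eta heta_meas heta_nonneg hetaPhi l hl
  set x₀ : ℝ := a + 1 with hx₀def
  have hx₀ : a < x₀ := by rw [hx₀def]; linarith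
  have hneg_fin : ∀ l : ℝ, 0 < l → ∫⁻ ω, (-(Phi (l * eta ω))).toENN ∂P < ⊤ := by
    intro l hl
    have hb : ∀ ω, (-(Phi (l * eta ω))).toENN ≤
        ENNReal.ofReal (|x₀| * l) * ENNReal.ofReal (eta ω) + ENNReal.ofReal |(u x₀).toReal| := by
      intro ω
      have h1 : (((u x₀).toReal - x₀ * (l * eta ω) : ℝ) : EReal) ≤ Phi (l * eta ω) :=
        philb x₀ hx₀ _
      have h2 : -(Phi (l * eta ω)) ≤ ((x₀ * (l * eta ω) - (u x₀).toReal : ℝ) : EReal) := by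
        rw [show ((x₀ * (l * eta ω) - (u x₀).toReal : ℝ) : EReal)
            = -(((u x₀).toReal - x₀ * (l * eta ω) : ℝ) : EReal) by
          rw [← EReal.coe_neg]; norm_num]
        exact EReal.neg_le_neg_iff.mpr h1
      calc (-(Phi (l * eta ω))).toENN
          ≤ ENNReal.ofReal (x₀ * (l * eta ω) - (u x₀).toReal) := by
            rw [← toENN_coe]; exact toENN_mono h2
        _ ≤ ENNReal.ofReal ((|x₀| * l) * eta ω + |(u x₀).toReal|) := by
            refine ENNReal.ofReal_le_ofReal ?_
            have := abs_nonneg x₀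
            have := le_abs_self x₀
            have := neg_abs_le (u x₀).toReal
            nlinarith [heta_nonneg ω, mul_nonneg (mul_nonneg (abs_nonneg x₀) hl.le)
              (heta_nonneg ω), mul_le_mul_of_nonneg_right
                (mul_le_mul_of_nonneg_right (le_abs_self x₀) hl.le) (heta_nonneg ω)]
        _ ≤ ENNReal.ofReal (|x₀| * l) * ENNReal.ofReal (eta ω) + ENNReal.ofReal |(u x₀).toReal| := by
            rw [ENNReal.ofReal_add (mul_nonneg (mul_nonneg (abs_nonneg _) hl.le)
              (heta_nonneg ω)) (abs_nonneg _),
              ENNReal.ofReal_mul (mul_nonneg (abs_nonneg _) hl.le)]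
    calc ∫⁻ ω, (-(Phi (l * eta ω))).toENN ∂P
        ≤ ∫⁻ ω, (ENNReal.ofReal (|x₀| * l) * ENNReal.ofReal (eta ω)
            + ENNReal.ofReal |(u x₀).toReal|) ∂P := lintegral_mono hb
      _ = ENNReal.ofReal (|x₀| * l) * (∫⁻ ω, ENNReal.ofReal (eta ω) ∂P)
            + ENNReal.ofReal |(u x₀).toReal| * 1 := by
          rw [lintegral_add_right _ measurable_const, lintegral_const,
            lintegral_const_mul _ heta_meas.ennreal_ofReal, measure_univ]
      _ < ⊤ := by
          refine ENNReal.add_lt_top.mpr ⟨?_, ?_⟩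
          · exact ENNReal.mul_lt_top ENNReal.ofReal_lt_top (lt_of_le_of_lt hmean_le ENNReal.one_lt_top)
          · simp [ENNReal.ofReal_lt_top]
  have heta_int : Integrable eta P := by
    refine ⟨heta_meas.aestronglyMeasurable, ?_⟩
    rw [hasFiniteIntegral_iff_ofReal (ae_of_all _ heta_nonneg)]
    exact lt_of_le_of_lt hmean_le ENNReal.one_lt_top
  have hm_int : ∫ ω, eta ω ∂P = m := by
    rw [integral_eq_lintegral_of_nonneg_ae (ae_of_all _ heta_nonneg)
      heta_meas.aestronglyMeasurable]
  have hpos_eq : ∀ l : ℝ, 0 < l → ∫⁻ ω, (Phi (l * eta ω)).toENN ∂P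
      = ∫⁻ ω, ENNReal.ofReal ((Phi (l * eta ω)).toReal) ∂P := by
    intro l hl
    refine lintegral_congr_ae ?_
    filter_upwards [hae_ne_top l hl] with ω hω
    rw [EReal.toENN, if_neg hω]
  have hneg_eq : ∀ l : ℝ, 0 < l → ∫⁻ ω, (-(Phi (l * eta ω))).toENN ∂P
      = ∫⁻ ω, ENNReal.ofReal (-(Phi (l * eta ω)).toReal) ∂P := by
    intro l hl
    refine lintegral_congr_ae ?_
    filter_upwards [hae_ne_top l hl] with ω hω
    obtain ⟨r, hr⟩ : ∃ r : ℝ, Phi (l * eta ω) = (r : EReal) :=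
      ⟨_, (EReal.coe_toReal hω (phi_ne_bot _)).symm⟩
    rw [hr, ← EReal.coe_neg, toENN_coe, EReal.toReal_coe]
  have hG_int : ∀ l : ℝ, 0 < l → Integrable (fun ω => (Phi (l * eta ω)).toReal) P := by
    intro l hl
    refine ⟨(hGmeas l hl).aestronglyMeasurable, ?_⟩
    rw [hasFiniteIntegral_iff_norm]
    have hpt : ∀ ω, ENNReal.ofReal ‖(Phi (l * eta ω)).toReal‖
        ≤ ENNReal.ofReal ((Phi (l * eta ω)).toReal)
          + ENNReal.ofReal (-(Phi (l * eta ω)).toReal) := by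
      intro ω
      rw [Real.norm_eq_abs]
      rcases le_total 0 ((Phi (l * eta ω)).toReal) with h | h
      · rw [abs_of_nonneg h]; exact le_add_right le_rfl
      · rw [abs_of_nonpos h]; exact le_add_left le_rfl
    calc ∫⁻ ω, ENNReal.ofReal ‖(Phi (l * eta ω)).toReal‖ ∂P
        ≤ ∫⁻ ω, (ENNReal.ofReal ((Phi (l * eta ω)).toReal)
            + ENNReal.ofReal (-(Phi (l * eta ω)).toReal)) ∂P := lintegral_mono hpt
      _ = ∫⁻ ω, ENNReal.ofReal ((Phi (l * eta ω)).toReal) ∂P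
            + ∫⁻ ω, ENNReal.ofReal (-(Phi (l * eta ω)).toReal) ∂P :=
          lintegral_add_left (hGmeas l hl).ennreal_ofReal _
      _ < ⊤ := by
          refine ENNReal.add_lt_top.mpr ⟨?_, ?_⟩
          · rw [← hpos_eq l hl]; exact hpos_fin l hl
          · rw [← hneg_eq l hl]; exact hneg_fin l hl
  have hewp : ∀ l : ℝ, 0 < l → ewp P (fun ω => Phi (l * eta ω))
      = ((∫ ω, (Phi (l * eta ω)).toReal ∂P : ℝ) : EReal) := by
    intro l hl
    have hA : (∫⁻ ω, (Phi (l * eta ω)).toENN ∂P) ≠ ⊤ := (hpos_fin l hl).ne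
    have hB : (∫⁻ ω, (-(Phi (l * eta ω))).toENN ∂P) ≠ ⊤ := (hneg_fin l hl).ne
    have h1 : ((∫⁻ ω, (Phi (l * eta ω)).toENN ∂P : ℝ≥0∞) : EReal)
        = (((∫⁻ ω, (Phi (l * eta ω)).toENN ∂P).toReal : ℝ) : EReal) := by
      rw [← EReal.toReal_coe_ennreal]
      exact (EReal.coe_toReal (by simpa using hA) (EReal.coe_ennreal_ne_bot _)).symm
    have h2 : ((∫⁻ ω, (-(Phi (l * eta ω))).toENN ∂P : ℝ≥0∞) : EReal)
        = (((∫⁻ ω, (-(Phi (l * eta ω))).toENN ∂P).toReal : ℝ) : EReal) := by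
      rw [← EReal.toReal_coe_ennreal]
      exact (EReal.coe_toReal (by simpa using hB) (EReal.coe_ennreal_ne_bot _)).symm
    rw [ewp, h1, h2, ← EReal.coe_sub]
    congr 1
    rw [integral_eq_lintegral_pos_part_sub_lintegral_neg_part (hG_int l hl),
      hpos_eq l hl, hneg_eq l hl]
  constructor
  · -- part 1
    intro hc t ht
    refine ⟨2 * t, by linarith, ?_⟩
    -- find K with positive measure
    have hS : P {ω | 0 < eta ω} ≠ 0 := by
      intro h0
      have hz : (fun ω => ENNReal.ofReal (eta ω)) =ᵐ[P] 0 := by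
        rw [Filter.EventuallyEq, ae_iff]
        refine measure_mono_null (fun ω hω => ?_) h0
        simp only [mem_setOf_eq, Pi.zero_apply] at hω ⊢
        exact lt_of_le_of_ne (heta_nonneg ω)
          (fun h => hω (by rw [← h]; exact ENNReal.ofReal_zero))
      have hzz : ∫⁻ ω, ENNReal.ofReal (eta ω) ∂P = 0 := by
        calc ∫⁻ ω, ENNReal.ofReal (eta ω) ∂P = ∫⁻ _ω, (0 : ℝ≥0∞) ∂P :=
              lintegral_congr_ae hz
          _ = 0 := lintegral_zero
      rw [hzz] at hmean_pos
      exact lt_irrefl _ hmean_pos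
    obtain ⟨K, hKpos, hKne⟩ : ∃ K : ℝ, 0 < K ∧ P {ω | 0 < eta ω ∧ eta ω ≤ K} ≠ 0 := by
      by_contra hcon
      push_neg at hcon
      have hcover : {ω | 0 < eta ω} ⊆ ⋃ n : ℕ, {ω | 0 < eta ω ∧ eta ω ≤ (n + 1 : ℝ)} := by
        intro ω hω
        obtain ⟨n, hn⟩ := exists_nat_ge (eta ω)
        exact mem_iUnion.mpr ⟨n, hω, by push_cast; linarith⟩
      have : P (⋃ n : ℕ, {ω | 0 < eta ω ∧ eta ω ≤ (n + 1 : ℝ)}) = 0 :=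
        measure_iUnion_null (fun n => hcon (n + 1 : ℝ) (by positivity))
      exact hS (measure_mono_null hcover this)
    set A : Set Ω := {ω | 0 < eta ω ∧ eta ω ≤ K} with hAdef
    have hAmeas : MeasurableSet A :=
      (measurableSet_lt measurable_const heta_meas).inter
        (measurableSet_le heta_meas measurable_const)
    obtain ⟨xK, hxK, hxKy⟩ := surj (2 * t * K) (by positivity)
    set ρ : Ω → ℝ := fun ω => t * eta ω * (if ω ∈ A then xK else a) with hρdef
    have hρ_meas : Measurable ρ :=
      (heta_meas.const_mul t).mul (Measurable.ite hAmeas measurable_const measurable_const)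
    have hpt : ∀ ω, (Phi (2 * t * eta ω)).toReal ≤ (Phi (t * eta ω)).toReal - ρ ω := by
      intro ω
      rcases (heta_nonneg ω).lt_or_eq with h | h
      · obtain ⟨x, hx, hxy⟩ := surj (2 * t * eta ω) (by positivity)
        have hk := keyineq (t * eta ω) (2 * t * eta ω) x (by positivity) (by nlinarith) hx hxy
        by_cases hA : ω ∈ A
        · have hxxK : xK ≤ x := by
            by_contra hcon
            push_neg at hcon
            have hlt := hdu_anti hx hxK hcon
            rw [hxy, hxKy] at hlt
            have hK2 : eta ω ≤ K := hA.2
            nlinarith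
          simp only [hρdef, if_pos hA]
          nlinarith [mul_nonneg (sub_nonneg.mpr hxxK) (mul_pos ht h).le]
        · simp only [hρdef, if_neg hA]
          nlinarith [mul_nonneg (sub_nonneg.mpr hx.le) (mul_pos ht h).le]
      · simp only [hρdef, ← h, mul_zero, zero_mul, sub_zero, le_refl]
    have hρ_int : Integrable ρ P := by
      refine (heta_int.const_mul (t * max |xK| |a|)).mono' hρ_meas.aestronglyMeasurable
        (ae_of_all _ (fun ω => ?_))
      have hite : |if ω ∈ A then xK else a| ≤ max |xK| |a| := by
        by_cases hA : ω ∈ A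
        · rw [if_pos hA]; exact le_max_left _ _
        · rw [if_neg hA]; exact le_max_right _ _
      calc ‖ρ ω‖ = t * eta ω * |if ω ∈ A then xK else a| := by
            rw [hρdef, Real.norm_eq_abs, abs_mul,
              abs_of_nonneg (mul_nonneg ht.le (heta_nonneg ω))]
        _ ≤ t * eta ω * max |xK| |a| :=
            mul_le_mul_of_nonneg_left hite (mul_nonneg ht.le (heta_nonneg ω))
        _ = t * max |xK| |a| * eta ω := by ring
    have hIA_pos : 0 < ∫ ω in A, eta ω ∂P := by
      rw [setIntegral_pos_iff_support_of_nonneg_ae (ae_of_all _ heta_nonneg)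
        heta_int.integrableOn]
      refine lt_of_lt_of_le ?_ (measure_mono (fun ω hω => ⟨ne_of_gt hω.1, hω⟩ :
        A ⊆ Function.support eta ∩ A))
      exact (pos_iff_ne_zero).mpr hKne
    have hsplit : ∫ ω in A, eta ω ∂P + ∫ ω in Aᶜ, eta ω ∂P = m := by
      rw [integral_add_compl hAmeas heta_int, hm_int]
    have hρ_val : ∫ ω, ρ ω ∂P
        = t * (xK * ∫ ω in A, eta ω ∂P + a * ∫ ω in Aᶜ, eta ω ∂P) := by
      have hrw : ρ = fun ω => t * (xK * A.indicator eta ω + a * Aᶜ.indicator eta ω) := by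
        funext ω
        by_cases hA : ω ∈ A
        · simp [hρdef, hA, indicator_of_mem, indicator_of_notMem]; ring
        · simp [hρdef, hA, indicator_of_mem, indicator_of_notMem]; ring
      rw [hrw]
      rw [integral_const_mul, integral_add ((heta_int.indicator hAmeas).const_mul xK)
        ((heta_int.indicator hAmeas.compl).const_mul a), integral_const_mul, integral_const_mul,
        integral_indicator hAmeas, integral_indicator hAmeas.compl]
    have hρ_gt : t * (a * m) < ∫ ω, ρ ω ∂P := by
      rw [hρ_val, ← hsplit]
      nlinarith [mul_pos (mul_pos ht (sub_pos.mpr hxK)) hIA_pos]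
    have hint : ∫ ω, (Phi (2 * t * eta ω)).toReal ∂P
        ≤ ∫ ω, (Phi (t * eta ω)).toReal ∂P - ∫ ω, ρ ω ∂P := by
      rw [← integral_sub (hG_int t ht) hρ_int]
      exact integral_mono (hG_int (2 * t) (by linarith)) ((hG_int t ht).sub hρ_int) hpt
    rw [hewp (2 * t) (by linarith), hewp t ht, ← EReal.coe_add, ← EReal.coe_add,
      EReal.coe_lt_coe_iff]
    have h4 : t * c ≤ t * (a * m) := mul_le_mul_of_nonneg_left hc ht.le
    linarith
  · -- part 2
    intro hc M
    have hD : 0 < a * m - c := sub_pos.mpr hc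
    set B : ℝ := ∫ ω, (Phi (1 * eta ω)).toReal ∂P with hBdef
    set s : ℝ := 1 + max 1 ((c + B - M + 1) / (a * m - c)) with hsdef
    have hs1 : 1 < s := by
      rw [hsdef]
      have := le_max_left 1 ((c + B - M + 1) / (a * m - c))
      linarith
    have hs0 : 0 < s := by linarith
    refine ⟨s, hs0, ?_⟩
    have hpt : ∀ ω, (Phi (s * eta ω)).toReal
        ≤ (Phi (1 * eta ω)).toReal - (s - 1) * a * eta ω := by
      intro ω
      rcases (heta_nonneg ω).lt_or_eq with h | h
      · obtain ⟨x, hx, hxy⟩ := surj (s * eta ω) (by positivity)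
        have hk := keyineq (1 * eta ω) (s * eta ω) x (by simpa using h) (by nlinarith) hx hxy
        nlinarith [mul_nonneg (mul_nonneg (sub_nonneg.mpr hx.le)
          (by linarith : (0:ℝ) ≤ s - 1)) h.le]
      · simp only [← h, mul_zero, sub_zero, le_refl]
    have hint : ∫ ω, (Phi (s * eta ω)).toReal ∂P ≤ B - (s - 1) * a * m := by
      have h1 : ∫ ω, ((Phi (1 * eta ω)).toReal - (s - 1) * a * eta ω) ∂P
          = B - (s - 1) * a * m := by
        rw [integral_sub (hG_int 1 one_pos) ((heta_int.const_mul ((s - 1) * a))),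
          integral_const_mul, hm_int, hBdef]
      rw [← h1]
      exact integral_mono (hG_int s hs0) ((hG_int 1 one_pos).sub
        (heta_int.const_mul ((s - 1) * a))) hpt
    rw [hewp s hs0, ← EReal.coe_add, EReal.coe_lt_coe_iff]
    have h5 : (c + B - M + 1) ≤ (s - 1) * (a * m - c) := by
      have h7 : (c + B - M + 1) / (a * m - c) ≤ s - 1 := by
        rw [hsdef]; simp [le_max_right]
      calc c + B - M + 1 = (c + B - M + 1) / (a * m - c) * (a * m - c) :=
            (div_mul_cancel₀ _ hD.ne').symm
        _ ≤ (s - 1) * (a * m - c) := mul_le_mul_of_nonneg_right h7 hD.le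
    nlinarith
  
end
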